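/- The number 172081 is composite, and it satisfies 172081 ≡ 1 (mod 8), 2^86040 ≡ 1 (mod 172081), and a^86040 ≡ 1 (mod 172081) for each a in {414, 415, 293} (where 414 = ⌊√172081⌋ and 293 = ⌊√(172081/2)⌋), but 294^86040 is congruent to neither 1 nor -1 modulo 172081. -/

import Mathlib

lemma natCast_ne_natCast (m a b : ℕ) [NeZero m] (ha : a < m) (hb : b < m) (h : a ≠ b) :
    (a : ZMod m) ≠ (b : ZMod m) := by
  intro heq
  have := congrArg ZMod.val heq
  rw [ZMod.val_cast_of_lt ha, ZMod.val_cast_of_lt hb] at this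
  exact h this

lemma pow_mod_helper (a n m r : ℕ) (h : a ^ n % m = r) :
    (a : ZMod m) ^ n = (r : ZMod m) := by
  rw [← Nat.cast_pow, ← ZMod.natCast_mod, h]

/-- `172081` is composite, satisfies `172081 ≡ 1 (mod 8)`, `2 ^ 86040 ≡ 1 (mod 172081)`,
and `a ^ 86040 ≡ 1 (mod 172081)` for `a ∈ {414, 415, 293}` (with `414 = ⌊√172081⌋` and
`293 = ⌊√(172081/2)⌋`), but `294 ^ 86040` is congruent to neither `1` nor `-1`
modulo `172081`. -/
theorem gauss_euler_detects_172081 :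
    ¬ (172081 : ℕ).Prime ∧
    172081 % 8 = 1 ∧
    (2 : ZMod 172081) ^ 86040 = 1 ∧
    Nat.sqrt 172081 = 414 ∧
    Nat.sqrt (172081 / 2) = 293 ∧
    (∀ a ∈ ({414, 415, 293} : Finset ℕ), (a : ZMod 172081) ^ 86040 = 1) ∧
    (294 : ZMod 172081) ^ 86040 ≠ 1 ∧
    (294 : ZMod 172081) ^ 86040 ≠ -1 := by
  have h2 : (2 : ZMod 172081) ^ 86040 = ((1 : ℕ) : ZMod 172081) := by
    have := pow_mod_helper 2 86040 172081 1 (by decide +kernel)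
    simpa using this
  have h414 := pow_mod_helper 414 86040 172081 1 (by decide +kernel)
  have h415 := pow_mod_helper 415 86040 172081 1 (by decide +kernel)
  have h293 := pow_mod_helper 293 86040 172081 1 (by decide +kernel)
  have h294 := pow_mod_helper 294 86040 172081 24584 (by decide +kernel)
  refine ⟨by norm_num, by norm_num, by simpa using h2, ?_, ?_, ?_, ?_, ?_⟩
  · have l1 : 414 ≤ Nat.sqrt 172081 := Nat.le_sqrt.mpr (by norm_num)
    have l2 : Nat.sqrt 172081 < 415 := Nat.sqrt_lt.mpr (by norm_num)
    omega
  · have l1 : 293 ≤ Nat.sqrt (172081 / 2) := Nat.le_sqrt.mpr (by norm_num)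
    have l2 : Nat.sqrt (172081 / 2) < 294 := Nat.sqrt_lt.mpr (by norm_num)
    omega
  · intro a ha
    fin_cases ha
    · simpa using h414
    · simpa using h415
    · simpa using h293
  · have : (294 : ZMod 172081) ^ 86040 = ((24584 : ℕ) : ZMod 172081) := by
      exact_mod_cast h294
    rw [this, show (1 : ZMod 172081) = ((1 : ℕ) : ZMod 172081) by norm_cast]
    exact natCast_ne_natCast _ _ _ (by norm_num) (by norm_num) (by norm_num)
  · have : (294 : ZMod 172081) ^ 86040 = ((24584 : ℕ) : ZMod 172081) := by
      exact_mod_cast h294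
    have hneg : (-1 : ZMod 172081) = ((172080 : ℕ) : ZMod 172081) := by
      have : ((172080 : ℕ) : ZMod 172081) + 1 = ((172081 : ℕ) : ZMod 172081) := by
        norm_cast
      rw [ZMod.natCast_self] at this
      linear_combination -this
    rw [this, hneg]
    exact natCast_ne_natCast _ _ _ (by norm_num) (by norm_num) (by norm_num)
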